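/- arXiv:2004.01446 — 5 statements merged into one kernel-verified Lean document; each statement's English description precedes it below -/
import Mathlib

section
/- Let Q₁, Q₂ be m × m upper triangular matrices over Z_2 with associated quadratic forms Q_i(x) = x Q_i xᵀ, and suppose the symplectic matrix B = (Q₁+Q₂) + (Q₁+Q₂)ᵀ has rank r over Z_2. Then for any c₁, c₂ ∈ {0,...,2^m−1}, the normalized inner product |⟨b₁, b₂⟩|/2^m of the ±1-modulated vectors b₁ (from Q₁(x)+L_{c₁}(x)) and b₂ (from Q₂(x)+L_{c₂}(x)) is at most 1/√(2^r), with equality attained for some choice of c₁, c₂. -/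
open Matrix

/-- The quadratic form `x ↦ x Q xᵀ` associated to a quadratic matrix `Q` over `Z_2`. -/
def qmf {m : ℕ} (Q : Matrix (Fin m) (Fin m) (ZMod 2)) (x : Fin m → ZMod 2) : ZMod 2 :=
  ∑ i, ∑ j, x i * Q i j * x j

/-- The (unnormalized) inner product of the ±1-modulated vectors of the Boolean
functions `x Q₁ xᵀ + v₁·xᵀ` and `x Q₂ xᵀ + v₂·xᵀ`. -/
def golayInner {m : ℕ} (Q₁ Q₂ : Matrix (Fin m) (Fin m) (ZMod 2))
    (v₁ v₂ : Fin m → ZMod 2) : ℤ :=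
  ∑ x : Fin m → ZMod 2,
    ((-1 : ℤ) ^ (qmf Q₁ x + ∑ r, v₁ r * x r).val)
      * ((-1 : ℤ) ^ (qmf Q₂ x + ∑ r, v₂ r * x r).val)

namespace GolayAux

attribute [local instance] Classical.propDecidable

def χ (a : ZMod 2) : ℤ := (-1) ^ a.val

lemma χ_add : ∀ a b : ZMod 2, χ (a + b) = χ a * χ b := by decide

lemma χ_zero : χ 0 = 1 := rfl

lemma zmod2_eq_one {a : ZMod 2} (h : a ≠ 0) : a = 1 := by
  revert a; decide

lemma sum_chi_hom {G : Type*} [AddCommGroup G] [Fintype G] (f : G →+ ZMod 2) :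
    ∑ g : G, χ (f g) = if ∀ g, f g = 0 then (Fintype.card G : ℤ) else 0 := by
  by_cases h : ∀ g, f g = 0
  · simp [h, χ_zero]
  · rw [if_neg h]
    push_neg at h
    obtain ⟨g₀, hg₀⟩ := h
    have hg1 : f g₀ = 1 := zmod2_eq_one hg₀
    have key : ∑ g : G, χ (f g) = - ∑ g : G, χ (f g) := by
      calc ∑ g : G, χ (f g) = ∑ g : G, χ (f (g₀ + g)) :=
            (Fintype.sum_equiv (Equiv.addLeft g₀) _ _ (fun g => rfl)).symm
        _ = - ∑ g : G, χ (f g) := by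
            rw [← Finset.sum_neg_distrib]
            refine Finset.sum_congr rfl fun g _ => ?_
            rw [map_add, χ_add, hg1]
            norm_num [show χ 1 = -1 from rfl]
    linarith


variable {m : ℕ}


lemma qmf_zero (Q : Matrix (Fin m) (Fin m) (ZMod 2)) : qmf Q 0 = 0 := by
  simp [qmf]

lemma qmf_add (Q : Matrix (Fin m) (Fin m) (ZMod 2)) (x y : Fin m → ZMod 2) :
    qmf Q (x + y) = qmf Q x + qmf Q y + x ⬝ᵥ ((Q + Qᵀ) *ᵥ y) := by
  have h1 : ∑ i, ∑ j, y i * (Q i j * x j) = ∑ i, ∑ j, x i * (Qᵀ i j * y j) := by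
    rw [Finset.sum_comm]
    exact Finset.sum_congr rfl fun i _ => Finset.sum_congr rfl fun j _ => by
      rw [transpose_apply]; ring
  simp only [qmf, dotProduct, mulVec, dotProduct, Pi.add_apply, Matrix.add_apply,
    mul_add, add_mul, Finset.sum_add_distrib, Finset.mul_sum, mul_assoc]
  rw [h1]; ring


lemma qmf_add_matrix (Q₁ Q₂ : Matrix (Fin m) (Fin m) (ZMod 2)) (x : Fin m → ZMod 2) :
    qmf (Q₁ + Q₂) x = qmf Q₁ x + qmf Q₂ x := by
  simp [qmf, Matrix.add_apply, mul_add, add_mul, Finset.sum_add_distrib]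

lemma sum_chi_dot (w : Fin m → ZMod 2) :
    ∑ x : Fin m → ZMod 2, χ (x ⬝ᵥ w) = if w = 0 then (2 ^ m : ℤ) else 0 := by
  let f : (Fin m → ZMod 2) →+ ZMod 2 :=
    { toFun := fun x => x ⬝ᵥ w
      map_zero' := by simp
      map_add' := fun a b => add_dotProduct a b w }
  have := sum_chi_hom f
  simp only [f, AddMonoidHom.coe_mk, ZeroHom.coe_mk] at this
  rw [this]
  have hcard : (Fintype.card (Fin m → ZMod 2) : ℤ) = 2 ^ m := by
    simp [Fintype.card_fun]
  have hiff : (∀ x : Fin m → ZMod 2, x ⬝ᵥ w = 0) ↔ w = 0 := by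
    constructor
    · intro h
      funext i
      have := h (Pi.single i 1)
      simpa [dotProduct, Pi.single_apply] using this
    · intro h x; simp [h]
  by_cases hw : w = 0
  · rw [if_pos (hiff.mpr hw), if_pos hw, hcard]
  · rw [if_neg (fun h => hw (hiff.mp h)), if_neg hw]


lemma zmod2_add_self (a : ZMod 2) : a + a = 0 := by
  fin_cases a <;> decide

noncomputable def Ksub (Q : Matrix (Fin m) (Fin m) (ZMod 2)) :
    Submodule (ZMod 2) (Fin m → ZMod 2) := LinearMap.ker (Q + Qᵀ).mulVecLin

lemma mem_Ksub {Q : Matrix (Fin m) (Fin m) (ZMod 2)} {h : Fin m → ZMod 2} :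
    h ∈ Ksub Q ↔ (Q + Qᵀ) *ᵥ h = 0 := by
  simp only [Ksub, LinearMap.mem_ker, mulVecLin_apply]

lemma sq_eq (Q : Matrix (Fin m) (Fin m) (ZMod 2)) (v : Fin m → ZMod 2) :
    (∑ x : Fin m → ZMod 2, χ (qmf Q x + v ⬝ᵥ x)) ^ 2
      = 2 ^ m * ∑ h : Ksub Q, χ (qmf Q h + v ⬝ᵥ (h : Fin m → ZMod 2)) := by
  classical
  set B := Q + Qᵀ with hB
  have key : ∀ x h : Fin m → ZMod 2,
      (qmf Q x + v ⬝ᵥ x) + (qmf Q (x + h) + v ⬝ᵥ (x + h))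
        = (qmf Q h + v ⬝ᵥ h) + x ⬝ᵥ (B *ᵥ h) := by
    intro x h
    rw [qmf_add, dotProduct_add]
    have e1 : qmf Q x + qmf Q x = 0 := zmod2_add_self _
    have e2 : v ⬝ᵥ x + v ⬝ᵥ x = 0 := zmod2_add_self _
    -- rearrange
    have : qmf Q x + v ⬝ᵥ x + (qmf Q x + qmf Q h + x ⬝ᵥ (B *ᵥ h) + (v ⬝ᵥ x + v ⬝ᵥ h))
        = (qmf Q x + qmf Q x) + (v ⬝ᵥ x + v ⬝ᵥ x) + ((qmf Q h + v ⬝ᵥ h) + x ⬝ᵥ (B *ᵥ h)) := by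
      ring
    rw [this, e1, e2, zero_add, zero_add]
  calc (∑ x : Fin m → ZMod 2, χ (qmf Q x + v ⬝ᵥ x)) ^ 2
      = ∑ x : Fin m → ZMod 2, ∑ y : Fin m → ZMod 2,
          χ (qmf Q x + v ⬝ᵥ x) * χ (qmf Q y + v ⬝ᵥ y) := by
        rw [sq, Finset.sum_mul_sum]
    _ = ∑ x : Fin m → ZMod 2, ∑ h : Fin m → ZMod 2,
          χ (qmf Q h + v ⬝ᵥ h) * χ (x ⬝ᵥ (B *ᵥ h)) := by
        refine Finset.sum_congr rfl fun x _ => ?_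
        rw [← Fintype.sum_equiv (Equiv.addLeft x)
          (fun h => χ (qmf Q x + v ⬝ᵥ x) * χ (qmf Q (x + h) + v ⬝ᵥ (x + h)))
          (fun y => χ (qmf Q x + v ⬝ᵥ x) * χ (qmf Q y + v ⬝ᵥ y)) (fun h => rfl)]
        refine Finset.sum_congr rfl fun h _ => ?_
        rw [← χ_add, key x h, χ_add]
    _ = ∑ h : Fin m → ZMod 2,
          χ (qmf Q h + v ⬝ᵥ h) * ∑ x : Fin m → ZMod 2, χ (x ⬝ᵥ (B *ᵥ h)) := by
        rw [Finset.sum_comm]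
        exact Finset.sum_congr rfl fun h _ => (Finset.mul_sum _ _ _).symm
    _ = ∑ h : Fin m → ZMod 2,
          (if B *ᵥ h = 0 then 2 ^ m * χ (qmf Q h + v ⬝ᵥ h) else 0) := by
        refine Finset.sum_congr rfl fun h _ => ?_
        rw [sum_chi_dot]
        by_cases hh : B *ᵥ h = 0 <;> simp [hh, mul_comm]
    _ = 2 ^ m * ∑ h : Ksub Q, χ (qmf Q h + v ⬝ᵥ (h : Fin m → ZMod 2)) := by
        rw [← Finset.sum_filter]
        rw [Finset.sum_subtype (Finset.univ.filter (fun h => B *ᵥ h = 0))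
          (p := fun h => h ∈ Ksub Q)
          (by intro h; simp only [Finset.mem_filter, Finset.mem_univ, true_and, mem_Ksub, hB])
          (fun h => 2 ^ m * χ (qmf Q h + v ⬝ᵥ h))]
        rw [← Finset.mul_sum]


noncomputable def gHom (Q : Matrix (Fin m) (Fin m) (ZMod 2)) (v : Fin m → ZMod 2) :
    ↥(Ksub Q) →+ ZMod 2 where
  toFun h := qmf Q h + v ⬝ᵥ (h : Fin m → ZMod 2)
  map_zero' := by simp [qmf_zero]
  map_add' a b := by
    have hb : (Q + Qᵀ) *ᵥ (b : Fin m → ZMod 2) = 0 := mem_Ksub.mp b.2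
    push_cast [Submodule.coe_add]
    rw [qmf_add, dotProduct_add, hb, dotProduct_zero]
    ring

lemma kernel_sum (Q : Matrix (Fin m) (Fin m) (ZMod 2)) (v : Fin m → ZMod 2) :
    ∑ h : Ksub Q, χ (qmf Q h + v ⬝ᵥ (h : Fin m → ZMod 2))
      = if ∀ h : Ksub Q, qmf Q h + v ⬝ᵥ (h : Fin m → ZMod 2) = 0
        then (Fintype.card (Ksub Q) : ℤ) else 0 := by
  exact sum_chi_hom (gHom Q v)

lemma card_Ksub (Q : Matrix (Fin m) (Fin m) (ZMod 2)) {r : ℕ} (hr : (Q + Qᵀ).rank = r) :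
    r ≤ m ∧ Fintype.card (Ksub Q) = 2 ^ (m - r) := by
  have hrn := LinearMap.finrank_range_add_finrank_ker (Q + Qᵀ).mulVecLin
  rw [Module.finrank_fin_fun] at hrn
  have hrank : Module.finrank (ZMod 2) (LinearMap.range (Q + Qᵀ).mulVecLin) = r := hr
  rw [hrank] at hrn
  have hle : r ≤ m := by omega
  refine ⟨hle, ?_⟩
  have hc := Module.card_eq_pow_finrank (K := ZMod 2) (V := ↥(Ksub Q))
  rw [hc, ZMod.card]
  congr 1
  show Module.finrank (ZMod 2) ↥(Ksub Q) = m - r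
  unfold Ksub
  omega

lemma exists_good_v (Q : Matrix (Fin m) (Fin m) (ZMod 2)) :
    ∃ v : Fin m → ZMod 2, ∀ h : Ksub Q, qmf Q h + v ⬝ᵥ (h : Fin m → ZMod 2) = 0 := by
  -- qmf restricted to Ksub Q is linear; extend and represent by a vector
  let φ : ↥(Ksub Q) →ₗ[ZMod 2] ZMod 2 :=
    { toFun := fun h => qmf Q h
      map_add' := fun a b => by
        have hb : (Q + Qᵀ) *ᵥ (b : Fin m → ZMod 2) = 0 := mem_Ksub.mp b.2
        push_cast [Submodule.coe_add]
        rw [qmf_add, hb, dotProduct_zero, add_zero]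
      map_smul' := fun c h => by
        rcases (by decide : ∀ c : ZMod 2, c = 0 ∨ c = 1) c with rfl | rfl <;> simp [qmf_zero] }
  obtain ⟨K', hK'⟩ := Submodule.exists_isCompl (Ksub Q)
  let ψ : (Fin m → ZMod 2) →ₗ[ZMod 2] ZMod 2 :=
    φ ∘ₗ (Submodule.projectionOnto _ _ hK')
  refine ⟨fun i => ψ (fun j => if i = j then 1 else 0), fun h => ?_⟩
  have h1 : ψ (h : Fin m → ZMod 2) = qmf Q h := by
    simp only [ψ, LinearMap.comp_apply, Submodule.projectionOnto_apply_left hK' h]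
    rfl
  have h2 : (fun i => ψ (fun j => if i = j then (1 : ZMod 2) else 0)) ⬝ᵥ (h : Fin m → ZMod 2)
      = ψ (h : Fin m → ZMod 2) := by
    conv_rhs => rw [pi_eq_sum_univ (h : Fin m → ZMod 2)]
    rw [map_sum]
    unfold dotProduct
    refine Finset.sum_congr rfl fun i _ => ?_
    rw [_root_.map_smul, smul_eq_mul, mul_comm]
  rw [h2, h1, zmod2_add_self]


lemma golayInner_eq {m : ℕ} (Q₁ Q₂ : Matrix (Fin m) (Fin m) (ZMod 2))
    (v₁ v₂ : Fin m → ZMod 2) :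
    golayInner Q₁ Q₂ v₁ v₂
      = ∑ x : Fin m → ZMod 2, χ (qmf (Q₁ + Q₂) x + (v₁ + v₂) ⬝ᵥ x) := by
  unfold golayInner
  refine Finset.sum_congr rfl fun x _ => ?_
  have hsum : (qmf Q₁ x + ∑ r, v₁ r * x r) + (qmf Q₂ x + ∑ r, v₂ r * x r)
      = qmf (Q₁ + Q₂) x + (v₁ + v₂) ⬝ᵥ x := by
    rw [qmf_add_matrix]
    simp only [dotProduct, Pi.add_apply, add_mul, Finset.sum_add_distrib]
    ring
  calc ((-1 : ℤ) ^ (qmf Q₁ x + ∑ r, v₁ r * x r).val)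
        * ((-1 : ℤ) ^ (qmf Q₂ x + ∑ r, v₂ r * x r).val)
      = χ (qmf Q₁ x + ∑ r, v₁ r * x r) * χ (qmf Q₂ x + ∑ r, v₂ r * x r) := rfl
    _ = χ ((qmf Q₁ x + ∑ r, v₁ r * x r) + (qmf Q₂ x + ∑ r, v₂ r * x r)) := (χ_add _ _).symm
    _ = χ (qmf (Q₁ + Q₂) x + (v₁ + v₂) ⬝ᵥ x) := by rw [hsum]

end GolayAux

/-- If the symplectic matrix `(Q₁+Q₂) + (Q₁+Q₂)ᵀ` of two upper triangular matrices
has rank `r` over `Z_2`, then the normalized inner product of the corresponding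
±1-modulated vectors is at most `1/√(2^r)` for all linear parts, with equality
attained for some choice. -/
theorem stmt7 (m r : ℕ) (Q₁ Q₂ : Matrix (Fin m) (Fin m) (ZMod 2))
    (hQ₁ : ∀ i j : Fin m, (j : ℕ) < (i : ℕ) → Q₁ i j = 0)
    (hQ₂ : ∀ i j : Fin m, (j : ℕ) < (i : ℕ) → Q₂ i j = 0)
    (hrank : ((Q₁ + Q₂) + (Q₁ + Q₂)ᵀ).rank = r) :
    (∀ v₁ v₂ : Fin m → ZMod 2,
        (|golayInner Q₁ Q₂ v₁ v₂| : ℝ) / 2 ^ m ≤ 1 / Real.sqrt (2 ^ r))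
      ∧ (∃ v₁ v₂ : Fin m → ZMod 2,
        (|golayInner Q₁ Q₂ v₁ v₂| : ℝ) / 2 ^ m = 1 / Real.sqrt (2 ^ r)) := by
  classical
  open GolayAux in
  obtain ⟨hle, hcard⟩ := card_Ksub (Q₁ + Q₂) hrank
  set Q := Q₁ + Q₂ with hQ
  have hsq : ∀ v₁ v₂ : Fin m → ZMod 2,
      (golayInner Q₁ Q₂ v₁ v₂) ^ 2
        = 2 ^ m * (if ∀ h : Ksub Q, qmf Q h + (v₁ + v₂) ⬝ᵥ (h : Fin m → ZMod 2) = 0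
            then (2 ^ (m - r) : ℤ) else 0) := by
    intro v₁ v₂
    rw [golayInner_eq, sq_eq, kernel_sum, hcard]
    push_cast
    rfl
  have hs2 : Real.sqrt (2 ^ r) > 0 := Real.sqrt_pos.mpr (by positivity)
  have hsqrt_sq : Real.sqrt (2 ^ r) ^ 2 = (2 : ℝ) ^ r := Real.sq_sqrt (by positivity)
  have hpow : (2 : ℝ) ^ (m - r) * 2 ^ r = 2 ^ m := by
    rw [← pow_add, Nat.sub_add_cancel hle]
  constructor
  · intro v₁ v₂
    have h2 : (golayInner Q₁ Q₂ v₁ v₂) ^ 2 ≤ 2 ^ m * 2 ^ (m - r) := by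
      rw [hsq]
      split
      · exact le_refl _
      · simp only [mul_zero]
        positivity
    have h3 : (|golayInner Q₁ Q₂ v₁ v₂| : ℝ) ^ 2 ≤ (2 : ℝ) ^ m * 2 ^ (m - r) := by
      have hcast : ((golayInner Q₁ Q₂ v₁ v₂ : ℤ) : ℝ) ^ 2 ≤ (2 : ℝ) ^ m * 2 ^ (m - r) := by
        exact_mod_cast h2
      rwa [sq_abs]
    rw [div_le_div_iff₀ (by positivity) hs2]
    have hnn : (0 : ℝ) ≤ |golayInner Q₁ Q₂ v₁ v₂| * Real.sqrt (2 ^ r) := by positivity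
    refine le_of_pow_le_pow_left₀ (n := 2) two_ne_zero (by positivity) ?_
    calc ((|golayInner Q₁ Q₂ v₁ v₂| : ℝ) * Real.sqrt (2 ^ r)) ^ 2
        = (|golayInner Q₁ Q₂ v₁ v₂| : ℝ) ^ 2 * Real.sqrt (2 ^ r) ^ 2 := by ring
      _ ≤ ((2 : ℝ) ^ m * 2 ^ (m - r)) * 2 ^ r := by
          rw [hsqrt_sq]
          exact mul_le_mul_of_nonneg_right h3 (by positivity)
      _ = (1 * 2 ^ m) ^ 2 := by rw [mul_assoc, hpow]; ring
  · obtain ⟨v, hv⟩ := exists_good_v Q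
    refine ⟨v, 0, ?_⟩
    have hcond : ∀ h : Ksub Q, qmf Q h + (v + 0) ⬝ᵥ (h : Fin m → ZMod 2) = 0 := by
      simpa using hv
    have h2 : (golayInner Q₁ Q₂ v 0) ^ 2 = 2 ^ m * 2 ^ (m - r) := by
      rw [hsq v 0, if_pos hcond]
    have h3 : (|golayInner Q₁ Q₂ v 0| : ℝ) ^ 2 = (2 : ℝ) ^ m * 2 ^ (m - r) := by
      have : ((golayInner Q₁ Q₂ v 0 : ℤ) : ℝ) ^ 2 = ((2 ^ m * 2 ^ (m - r) : ℤ) : ℝ) := by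
        exact_mod_cast congrArg (fun z : ℤ => (z : ℝ)) h2
      rw [sq_abs]
      push_cast at this ⊢
      linarith
    have habs : (|golayInner Q₁ Q₂ v 0| : ℝ) * Real.sqrt (2 ^ r) = 2 ^ m := by
      have hA : ((|golayInner Q₁ Q₂ v 0| : ℝ) * Real.sqrt (2 ^ r)) ^ 2 = ((2 : ℝ) ^ m) ^ 2 := by
        rw [mul_pow, hsqrt_sq, h3, mul_assoc, hpow]
        ring
      have hB := congrArg Real.sqrt hA
      rwa [Real.sqrt_sq (by positivity), Real.sqrt_sq (by positivity)] at hB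
    rw [div_eq_div_iff (by positivity) hs2.ne', one_mul]
    exact habs
end

section
/- For a permutation π of {1,...,m}, the quadratic form Q_π(x) = Σ_{r=1}^{m−1} x_{π(r)} x_{π(r+1)} yields, for any choice of v ∈ Z_2^m and e ∈ Z_2, a Golay complementary sequence: the ±1 modulation b of the truth-table vector of f(x) = Q_π(x) + Σ_r v_r x_r + e satisfies that the sum of |Σ_{i=0}^{2^m−1} b_i z^i|² over the complementary pair is constant; in particular, the continuous PAPR of b, defined as max_{t∈[0,1)} |Σ_{i=0}^{2^m−1} b_i e^{j2πit}|² / 2^m, is at most 2. -/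
/-- The `k`-th binary digit of `i`, as an element of `ZMod 2`. -/
def bitf (i k : ℕ) : ZMod 2 := if i.testBit k then 1 else 0

/-! ### Generic arithmetic helpers -/

private lemma gdj_lor_eq_add : ∀ (a b : ℕ), (∀ k, ¬(a.testBit k = true ∧ b.testBit k = true)) →
    a ||| b = a + b := by
  intro a
  induction a using Nat.binaryRec with
  | zero => simp
  | bit ab a' ih =>
    intro b h
    cases b using Nat.binaryRec with
    | zero => simp
    | bit bb b' =>
      rw [Nat.lor_bit, Nat.bit_val, Nat.bit_val, Nat.bit_val, ih]
      · have h0 := h 0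
        simp [Nat.testBit_bit_zero] at h0
        cases ab <;> cases bb <;> simp_all <;> ring
      · intro k
        have := h (k+1)
        simpa [Nat.testBit_bit_succ] using this

private lemma gdj_xor_two_pow_false {i p : ℕ} (h : i.testBit p = false) :
    i ^^^ 2^p = i + 2^p := by
  have h1 : i ^^^ 2^p = i ||| 2^p := by
    apply Nat.eq_of_testBit_eq
    intro k
    simp only [Nat.testBit_xor, Nat.testBit_lor, Nat.testBit_two_pow]
    rcases eq_or_ne p k with rfl | hk
    · simp [h]
    · simp [hk]
  rw [h1]
  apply gdj_lor_eq_add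
  intro k hk
  rw [Nat.testBit_two_pow] at hk
  rcases hk with ⟨hik, hpk⟩
  have : p = k := by simpa using hpk
  subst this
  rw [h] at hik
  exact Bool.false_ne_true hik

private lemma gdj_xor_sum {i j q : ℕ} (h : i.testBit q = j.testBit q) :
    (i ^^^ 2^q) + j = i + (j ^^^ 2^q) := by
  cases hb : i.testBit q with
  | false =>
    rw [gdj_xor_two_pow_false hb, gdj_xor_two_pow_false (h ▸ hb)]
    ring
  | true =>
    have hbi : (i ^^^ 2^q).testBit q = false := by
      simp [Nat.testBit_xor, hb]
    have hbj : (j ^^^ 2^q).testBit q = false := by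
      simp [Nat.testBit_xor, ← h, hb]
    have hi : (i ^^^ 2^q) + 2^q = i := by
      rw [← gdj_xor_two_pow_false hbi, Nat.xor_xor_cancel_right]
    have hj : (j ^^^ 2^q) + 2^q = j := by
      rw [← gdj_xor_two_pow_false hbj, Nat.xor_xor_cancel_right]
    omega

private lemma gdj_neg_one_pow_add (a b : ZMod 2) :
    ((-1:ℂ))^((a+b).val) = (-1)^(a.val) * (-1)^(b.val) := by
  rcases (show ∀ x : ZMod 2, x = 0 ∨ x = 1 by decide) a with rfl | rfl <;>
  rcases (show ∀ x : ZMod 2, x = 0 ∨ x = 1 by decide) b with rfl | rfl <;>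
    simp [show ((1:ZMod 2)+1) = 0 from rfl, show ZMod.val (1:ZMod 2) = 1 from rfl,
      show ZMod.val (0:ZMod 2) = 0 from rfl]

private lemma gdj_neg_one_pow_succ (a : ZMod 2) :
    ((-1:ℂ))^((a+1).val) = -((-1)^(a.val)) := by
  rcases (show ∀ x : ZMod 2, x = 0 ∨ x = 1 by decide) a with rfl | rfl <;>
    simp [show ((1:ZMod 2)+1) = 0 from rfl, show ZMod.val (1:ZMod 2) = 1 from rfl,
      show ZMod.val (0:ZMod 2) = 0 from rfl]

/-! ### bitf helpers -/

private lemma gdj_bitf_xor (i p k : ℕ) :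
    bitf (i ^^^ 2^p) k = bitf i k + (if p = k then 1 else 0) := by
  unfold bitf
  rw [Nat.testBit_xor, Nat.testBit_two_pow]
  rcases eq_or_ne p k with rfl | h
  · cases hb : i.testBit p <;> simp [hb] <;> decide
  · simp [h]

private lemma gdj_bitf_add_of_ne {i j k : ℕ} (h : i.testBit k ≠ j.testBit k) :
    bitf i k + bitf j k = 1 := by
  unfold bitf
  cases hi : i.testBit k <;> cases hj : j.testBit k <;> simp_all <;> decide

private lemma gdj_bitf_congr {i j k : ℕ} (h : i.testBit k = j.testBit k) :
    bitf i k = bitf j k := by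
  unfold bitf; rw [h]

/-! ### The Boolean function and its truth table -/

/-- The quadratic + affine Boolean function of the Davis–Jedwab construction,
evaluated on the binary digits of `i`. -/
def gdjF (m : ℕ) (π : Equiv.Perm (Fin (m + 1))) (v : Fin (m + 1) → ZMod 2) (e : ZMod 2)
    (i : ℕ) : ZMod 2 :=
  (∑ r : Fin m, bitf i (π r.castSucc).val * bitf i (π r.succ).val)
    + (∑ r : Fin (m + 1), v r * bitf i r.val) + e

private lemma gdjF_flip (m : ℕ) (π : Equiv.Perm (Fin (m + 1))) (v : Fin (m + 1) → ZMod 2)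
    (e : ZMod 2) (i : ℕ) (kq : Fin (m + 1)) (hkq : kq.val < m) :
    gdjF m π v e (i ^^^ 2 ^ (π kq).val)
      = gdjF m π v e i
        + (if 1 ≤ kq.val then bitf i (π ⟨kq.val - 1, by omega⟩).val else 0)
        + bitf i (π ⟨kq.val + 1, by omega⟩).val + v (π kq) := by
  have hb : ∀ k : Fin (m+1), bitf (i ^^^ 2 ^ (π kq).val) (π k).val
      = bitf i (π k).val + (if kq = k then 1 else 0) := by
    intro k
    rw [gdj_bitf_xor]
    congr 1
    simp [Fin.val_inj, EmbeddingLike.apply_eq_iff_eq]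
  have hb' : ∀ k : Fin (m+1), bitf (i ^^^ 2 ^ (π kq).val) k.val
      = bitf i k.val + (if π kq = k then 1 else 0) := by
    intro k
    rw [gdj_bitf_xor]
    congr 1
    simp [Fin.val_inj]
  unfold gdjF
  -- linear part
  have hlin : (∑ r : Fin (m+1), v r * bitf (i ^^^ 2 ^ (π kq).val) r.val)
      = (∑ r : Fin (m+1), v r * bitf i r.val) + v (π kq) := by
    calc (∑ r : Fin (m+1), v r * bitf (i ^^^ 2 ^ (π kq).val) r.val)
        = ∑ r : Fin (m+1), (v r * bitf i r.val + if π kq = r then v r else 0) := by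
          refine Finset.sum_congr rfl fun r _ => ?_
          rw [hb' r, mul_add]
          congr 1
          split_ifs <;> simp
      _ = (∑ r : Fin (m+1), v r * bitf i r.val) + ∑ r : Fin (m+1), (if π kq = r then v r else 0) := by
          rw [Finset.sum_add_distrib]
      _ = (∑ r : Fin (m+1), v r * bitf i r.val) + v (π kq) := by
          rw [Finset.sum_ite_eq]
          simp
  -- quadratic part
  have hquad : (∑ r : Fin m, bitf (i ^^^ 2 ^ (π kq).val) (π r.castSucc).val
        * bitf (i ^^^ 2 ^ (π kq).val) (π r.succ).val)
      = (∑ r : Fin m, bitf i (π r.castSucc).val * bitf i (π r.succ).val)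
        + (if 1 ≤ kq.val then bitf i (π ⟨kq.val - 1, by omega⟩).val else 0)
        + bitf i (π ⟨kq.val + 1, by omega⟩).val := by
    have expand : ∀ r : Fin m, bitf (i ^^^ 2 ^ (π kq).val) (π r.castSucc).val
          * bitf (i ^^^ 2 ^ (π kq).val) (π r.succ).val
        = bitf i (π r.castSucc).val * bitf i (π r.succ).val
          + (if kq = r.succ then bitf i (π r.castSucc).val else 0)
          + (if kq = r.castSucc then bitf i (π r.succ).val else 0)
          + (if kq = r.castSucc then 1 else 0) * (if kq = r.succ then 1 else 0) := by
      intro r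
      rw [hb r.castSucc, hb r.succ]
      ring_nf
      split_ifs <;> ring
    rw [Finset.sum_congr rfl fun r _ => expand r]
    rw [Finset.sum_add_distrib, Finset.sum_add_distrib, Finset.sum_add_distrib]
    have hS4 : (∑ r : Fin m, (if kq = r.castSucc then (1:ZMod 2) else 0)
        * (if kq = r.succ then 1 else 0)) = 0 := by
      apply Finset.sum_eq_zero
      intro r _
      rcases eq_or_ne kq r.castSucc with h1 | h1
      · rcases eq_or_ne kq r.succ with h2 | h2
        · exfalso
          have : r.castSucc = r.succ := h1 ▸ h2
          have := congrArg Fin.val this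
          simp at this
        · simp [h2]
      · simp [h1]
    have hS2 : (∑ r : Fin m, (if kq = r.succ then bitf i (π r.castSucc).val else 0))
        = (if 1 ≤ kq.val then bitf i (π ⟨kq.val - 1, by omega⟩).val else 0) := by
      by_cases h1 : 1 ≤ kq.val
      · have hc : ∀ r : Fin m, (kq = r.succ) ↔ (r = ⟨kq.val - 1, by omega⟩) := by
          intro r
          rw [Fin.ext_iff, Fin.ext_iff]
          simp [Fin.val_succ]
          omega
        calc (∑ r : Fin m, (if kq = r.succ then bitf i (π r.castSucc).val else 0))
            = ∑ r : Fin m, (if r = (⟨kq.val - 1, by omega⟩ : Fin m)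
                then bitf i (π r.castSucc).val else 0) := by
              refine Finset.sum_congr rfl fun r _ => ?_
              rw [if_congr (hc r) rfl rfl]
          _ = bitf i (π ((⟨kq.val - 1, by omega⟩ : Fin m).castSucc)).val := by
              rw [Finset.sum_ite_eq']
              simp
          _ = _ := by
              rw [if_pos h1]
              congr 1
      · have h0 : kq.val = 0 := by omega
        rw [if_neg h1]
        apply Finset.sum_eq_zero
        intro r _
        rw [if_neg]
        intro hr
        have := congrArg Fin.val hr
        simp [Fin.val_succ, h0] at this
    have hS3 : (∑ r : Fin m, (if kq = r.castSucc then bitf i (π r.succ).val else 0))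
        = bitf i (π ⟨kq.val + 1, by omega⟩).val := by
      have hc : ∀ r : Fin m, (kq = r.castSucc) ↔ (r = ⟨kq.val, hkq⟩) := by
        intro r
        rw [Fin.ext_iff, Fin.ext_iff]
        simp
        omega
      calc (∑ r : Fin m, (if kq = r.castSucc then bitf i (π r.succ).val else 0))
          = ∑ r : Fin m, (if r = (⟨kq.val, hkq⟩ : Fin m)
              then bitf i (π r.succ).val else 0) := by
            refine Finset.sum_congr rfl fun r _ => ?_
            rw [if_congr (hc r) rfl rfl]
        _ = bitf i (π ((⟨kq.val, hkq⟩ : Fin m).succ)).val := by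
            rw [Finset.sum_ite_eq']
            simp
        _ = _ := by congr 1
    rw [hS2, hS3, hS4, add_zero]
  rw [hquad, hlin]
  ring

private lemma gdj_key (m : ℕ) (π : Equiv.Perm (Fin (m + 1))) (v : Fin (m + 1) → ZMod 2)
    (e : ZMod 2) (i j : ℕ) (kq : Fin (m + 1)) (hkq : kq.val < m)
    (hagree : 1 ≤ kq.val →
      i.testBit (π ⟨kq.val - 1, by omega⟩).val = j.testBit (π ⟨kq.val - 1, by omega⟩).val)
    (hdiff : i.testBit (π ⟨kq.val + 1, by omega⟩).val ≠ j.testBit (π ⟨kq.val + 1, by omega⟩).val) :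
    gdjF m π v e (i ^^^ 2 ^ (π kq).val) + gdjF m π v e (j ^^^ 2 ^ (π kq).val)
      = gdjF m π v e i + gdjF m π v e j + 1 := by
  rw [gdjF_flip m π v e i kq hkq, gdjF_flip m π v e j kq hkq]
  have h1 : bitf i (π ⟨kq.val + 1, by omega⟩).val + bitf j (π ⟨kq.val + 1, by omega⟩).val = 1 :=
    gdj_bitf_add_of_ne hdiff
  have h2 : (if 1 ≤ kq.val then bitf i (π ⟨kq.val - 1, by omega⟩).val else 0)
      = (if 1 ≤ kq.val then bitf j (π ⟨kq.val - 1, by omega⟩).val else 0) := by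
    split_ifs with h
    · exact gdj_bitf_congr (hagree h)
    · rfl
  rw [h2]
  have main : ∀ a b A c d w : ZMod 2, c + d = 1 →
      (a + A + c + w) + (b + A + d + w) = a + b + 1 := by decide
  exact main _ _ _ _ _ _ h1

/-! ### The set of differing (π-ordered) bit positions -/

private def gdjD (m : ℕ) (π : Equiv.Perm (Fin (m + 1))) (i j : ℕ) : Finset (Fin (m + 1)) :=
  Finset.univ.filter fun k => ¬ (i.testBit (π k).val = j.testBit (π k).val)

private lemma gdjD_mem {m : ℕ} {π : Equiv.Perm (Fin (m + 1))} {i j : ℕ} {k : Fin (m+1)} :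
    k ∈ gdjD m π i j ↔ ¬ (i.testBit (π k).val = j.testBit (π k).val) := by
  simp [gdjD]

private lemma gdjD_nonempty {m : ℕ} (π : Equiv.Perm (Fin (m + 1))) {i j : ℕ}
    (hi : i < 2 ^ (m+1)) (hj : j < 2 ^ (m+1)) (hne : i ≠ j) : (gdjD m π i j).Nonempty := by
  by_contra h
  rw [Finset.not_nonempty_iff_eq_empty] at h
  rw [gdjD, Finset.filter_eq_empty_iff] at h
  apply hne
  apply Nat.eq_of_testBit_eq
  intro k
  by_cases hk : k < m + 1
  · have := h (Finset.mem_univ (π.symm ⟨k, hk⟩))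
    rw [Equiv.apply_symm_apply] at this
    simpa using this
  · rw [Nat.testBit_lt_two_pow, Nat.testBit_lt_two_pow]
    · exact lt_of_lt_of_le hj (Nat.pow_le_pow_right (by norm_num) (by omega))
    · exact lt_of_lt_of_le hi (Nat.pow_le_pow_right (by norm_num) (by omega))

private lemma gdjD_xor {m : ℕ} (π : Equiv.Perm (Fin (m + 1))) (i j q : ℕ) :
    gdjD m π (i ^^^ 2^q) (j ^^^ 2^q) = gdjD m π i j := by
  ext k
  simp only [gdjD_mem, Nat.testBit_xor]
  cases (2^q).testBit (π k).val <;>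
    cases hik : i.testBit (π k).val <;> cases hjk : j.testBit (π k).val <;> simp_all

/-! ### The involution -/

private def gdjFlip {m : ℕ} (k : Fin (m+1)) (i : Fin (2^(m+1))) : Fin (2^(m+1)) :=
  ⟨i.val ^^^ 2^(k.val), Nat.xor_lt_two_pow i.isLt (Nat.pow_lt_pow_right one_lt_two k.isLt)⟩


private def gdjR (m : ℕ) (π : Equiv.Perm (Fin (m + 1)))
    (p : Fin (2^(m+1)) × Fin (2^(m+1))) (hne : p.1 ≠ p.2) : Fin (m+1) :=
  (gdjD m π p.1.val p.2.val).min'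
    (gdjD_nonempty π p.1.isLt p.2.isLt (fun hv => hne (Fin.ext hv)))

private def gdjInv (m : ℕ) (π : Equiv.Perm (Fin (m + 1)))
    (p : Fin (2^(m+1)) × Fin (2^(m+1))) : Fin (2^(m+1)) × Fin (2^(m+1)) :=
  if h : p.1 = p.2 then p else
  if h0 : (gdjR m π p h).val = 0 then p
  else
    (gdjFlip (π ⟨(gdjR m π p h).val - 1,
        Nat.lt_of_le_of_lt (Nat.sub_le _ _) (gdjR m π p h).isLt⟩) p.1,
     gdjFlip (π ⟨(gdjR m π p h).val - 1,
        Nat.lt_of_le_of_lt (Nat.sub_le _ _) (gdjR m π p h).isLt⟩) p.2)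

/-- The modified coefficient vector giving the complementary sequence. -/
private def gdjV (m : ℕ) (π : Equiv.Perm (Fin (m + 1))) (v : Fin (m + 1) → ZMod 2) :
    Fin (m + 1) → ZMod 2 :=
  fun r => v r + (if r = π 0 then 1 else 0)

private lemma gdjV_apply (m : ℕ) (π : Equiv.Perm (Fin (m + 1))) (v : Fin (m + 1) → ZMod 2)
    (e : ZMod 2) (i : ℕ) :
    gdjF m π (gdjV m π v) e i = gdjF m π v e i + bitf i (π 0).val := by
  unfold gdjF gdjV
  have : (∑ r : Fin (m+1), (v r + (if r = π 0 then 1 else 0)) * bitf i r.val)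
      = (∑ r : Fin (m+1), v r * bitf i r.val) + bitf i (π 0).val := by
    calc (∑ r : Fin (m+1), (v r + (if r = π 0 then 1 else 0)) * bitf i r.val)
        = ∑ r : Fin (m+1), (v r * bitf i r.val + (if r = π 0 then bitf i r.val else 0)) := by
          refine Finset.sum_congr rfl fun r _ => ?_
          rw [add_mul]
          congr 1
          split_ifs <;> simp
      _ = (∑ r : Fin (m+1), v r * bitf i r.val)
            + ∑ r : Fin (m+1), (if r = π 0 then bitf i r.val else 0) := by
          rw [Finset.sum_add_distrib]
      _ = _ := by rw [Finset.sum_ite_eq']; simp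
  rw [this]
  ring

/-- The summand of the double sum: coefficient times complex exponential. -/
private noncomputable def gdjT (m : ℕ) (π : Equiv.Perm (Fin (m + 1)))
    (v : Fin (m + 1) → ZMod 2) (e : ZMod 2) (c : ℂ)
    (p : Fin (2^(m+1)) × Fin (2^(m+1))) : ℂ :=
  ((-1:ℂ)^((gdjF m π v e p.1.val + gdjF m π v e p.2.val).val)
    + (-1:ℂ)^((gdjF m π (gdjV m π v) e p.1.val + gdjF m π (gdjV m π v) e p.2.val).val))
  * Complex.exp (c * p.1.val - c * p.2.val)

private lemma gdjT_zero_of_min0 (m : ℕ) (π : Equiv.Perm (Fin (m + 1)))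
    (v : Fin (m + 1) → ZMod 2) (e : ZMod 2) (c : ℂ)
    (p : Fin (2^(m+1)) × Fin (2^(m+1))) (hne : p.1 ≠ p.2)
    (h0 : (gdjR m π p hne).val = 0) : gdjT m π v e c p = 0 := by
  have hrD := Finset.min'_mem (gdjD m π p.1.val p.2.val)
    (gdjD_nonempty π p.1.isLt p.2.isLt (fun hv => hne (Fin.ext hv)))
  rw [show (gdjD m π p.1.val p.2.val).min'
    (gdjD_nonempty π p.1.isLt p.2.isLt (fun hv => hne (Fin.ext hv))) = gdjR m π p hne from rfl]
    at hrD
  have h00 : gdjR m π p hne = 0 := Fin.ext h0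
  rw [h00] at hrD
  rw [gdjD_mem] at hrD
  have bsum : bitf p.1.val (π 0).val + bitf p.2.val (π 0).val = 1 := gdj_bitf_add_of_ne hrD
  have gsum : gdjF m π (gdjV m π v) e p.1.val + gdjF m π (gdjV m π v) e p.2.val
      = (gdjF m π v e p.1.val + gdjF m π v e p.2.val) + 1 := by
    rw [gdjV_apply, gdjV_apply]
    have main : ∀ a b cc d : ZMod 2, cc + d = 1 → (a + cc) + (b + d) = (a + b) + 1 := by decide
    exact main _ _ _ _ bsum
  unfold gdjT
  rw [gsum, gdj_neg_one_pow_succ]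
  ring

private lemma gdjR_mem (m : ℕ) (π : Equiv.Perm (Fin (m + 1)))
    (p : Fin (2^(m+1)) × Fin (2^(m+1))) (hne : p.1 ≠ p.2) :
    gdjR m π p hne ∈ gdjD m π p.1.val p.2.val :=
  Finset.min'_mem _ _

private lemma gdjR_min (m : ℕ) (π : Equiv.Perm (Fin (m + 1)))
    (p : Fin (2^(m+1)) × Fin (2^(m+1))) (hne : p.1 ≠ p.2) (k : Fin (m+1))
    (hk : k.val < (gdjR m π p hne).val) :
    p.1.val.testBit (π k).val = p.2.val.testBit (π k).val := by
  by_contra hcon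
  have hmem : k ∈ gdjD m π p.1.val p.2.val := gdjD_mem.mpr hcon
  have := Finset.min'_le _ k hmem
  rw [show (gdjD m π p.1.val p.2.val).min'
    (gdjD_nonempty π p.1.isLt p.2.isLt (fun hv => hne (Fin.ext hv))) = gdjR m π p hne
    from rfl] at this
  rw [Fin.le_def] at this
  omega

private lemma gdjT_flip (m : ℕ) (π : Equiv.Perm (Fin (m + 1)))
    (v : Fin (m + 1) → ZMod 2) (e : ZMod 2) (c : ℂ)
    (p : Fin (2^(m+1)) × Fin (2^(m+1))) (hne : p.1 ≠ p.2)
    (h0 : (gdjR m π p hne).val ≠ 0) (kq : Fin (m+1))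
    (hkq_eq : kq.val = (gdjR m π p hne).val - 1) :
    gdjT m π v e c (gdjFlip (π kq) p.1, gdjFlip (π kq) p.2) = - gdjT m π v e c p := by
  have hrlt := (gdjR m π p hne).isLt
  have hkq : kq.val < m := by omega
  have hrD := gdjR_mem m π p hne
  have hre : (⟨kq.val + 1, by omega⟩ : Fin (m+1)) = gdjR m π p hne := by
    apply Fin.ext
    simp
    omega
  have hdiff : p.1.val.testBit (π ⟨kq.val + 1, by omega⟩).val
      ≠ p.2.val.testBit (π ⟨kq.val + 1, by omega⟩).val := by
    rw [hre]
    exact gdjD_mem.mp hrD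
  have hagree : 1 ≤ kq.val →
      p.1.val.testBit (π ⟨kq.val - 1, by omega⟩).val
        = p.2.val.testBit (π ⟨kq.val - 1, by omega⟩).val := by
    intro h1
    exact gdjR_min m π p hne ⟨kq.val - 1, by omega⟩ (by simp; omega)
  have fsum := gdj_key m π v e p.1.val p.2.val kq hkq hagree hdiff
  have gsum := gdj_key m π (gdjV m π v) e p.1.val p.2.val kq hkq hagree hdiff
  have hq : p.1.val.testBit (π kq).val = p.2.val.testBit (π kq).val :=
    gdjR_min m π p hne kq (by omega)
  have hnat := gdj_xor_sum (q := (π kq).val) hq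
  have hC : ((p.1.val ^^^ 2^((π kq).val) : ℕ) : ℂ) + (p.2.val : ℂ)
      = (p.1.val : ℂ) + ((p.2.val ^^^ 2^((π kq).val) : ℕ) : ℂ) := by
    exact_mod_cast congrArg (fun n : ℕ => (n : ℂ)) hnat
  have hexp : Complex.exp (c * ((p.1.val ^^^ 2^((π kq).val) : ℕ) : ℂ)
        - c * ((p.2.val ^^^ 2^((π kq).val) : ℕ) : ℂ))
      = Complex.exp (c * (p.1.val : ℂ) - c * (p.2.val : ℂ)) := by
    congr 1
    linear_combination c * hC
  unfold gdjT
  show ((-1:ℂ)^((gdjF m π v e (gdjFlip (π kq) p.1).val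
        + gdjF m π v e (gdjFlip (π kq) p.2).val).val) + _) * _ = _
  have hv1 : (gdjFlip (π kq) p.1).val = p.1.val ^^^ 2^((π kq).val) := rfl
  have hv2 : (gdjFlip (π kq) p.2).val = p.2.val ^^^ 2^((π kq).val) := rfl
  rw [hv1, hv2, fsum, gsum, gdj_neg_one_pow_succ, gdj_neg_one_pow_succ, hexp]
  ring

private lemma gdjR_flip (m : ℕ) (π : Equiv.Perm (Fin (m + 1)))
    (p : Fin (2^(m+1)) × Fin (2^(m+1))) (hne : p.1 ≠ p.2) (k : Fin (m+1))
    (hne' : (gdjFlip (π k) p.1, gdjFlip (π k) p.2).1 ≠ (gdjFlip (π k) p.1, gdjFlip (π k) p.2).2) :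
    gdjR m π (gdjFlip (π k) p.1, gdjFlip (π k) p.2) hne' = gdjR m π p hne := by
  have hD : gdjD m π (gdjFlip (π k) p.1).val (gdjFlip (π k) p.2).val
      = gdjD m π p.1.val p.2.val := gdjD_xor π p.1.val p.2.val ((π k).val)
  unfold gdjR
  apply le_antisymm
  · apply Finset.min'_le
    rw [show ((gdjFlip (π k) p.1, gdjFlip (π k) p.2).1 : Fin (2^(m+1))).val
      = (gdjFlip (π k) p.1).val from rfl]
    rw [show ((gdjFlip (π k) p.1, gdjFlip (π k) p.2).2 : Fin (2^(m+1))).val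
      = (gdjFlip (π k) p.2).val from rfl]
    rw [hD]
    exact Finset.min'_mem _ _
  · apply Finset.min'_le
    rw [← hD]
    exact Finset.min'_mem _ _

private lemma gdjFlip_ne {m : ℕ} (k : Fin (m+1)) (i j : Fin (2^(m+1))) (h : i ≠ j) :
    gdjFlip k i ≠ gdjFlip k j := by
  intro hc
  apply h
  apply Fin.ext
  have hv : i.val ^^^ 2^(k.val) = j.val ^^^ 2^(k.val) := congrArg Fin.val hc
  have := congrArg (fun n => n ^^^ 2^(k.val)) hv
  simpa [Nat.xor_xor_cancel_right] using this

private lemma gdjFlip_flip {m : ℕ} (k : Fin (m+1)) (i : Fin (2^(m+1))) :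
    gdjFlip k (gdjFlip k i) = i := by
  apply Fin.ext
  show (i.val ^^^ 2^(k.val)) ^^^ 2^(k.val) = i.val
  rw [Nat.xor_xor_cancel_right]

private lemma gdj_offdiag_sum (m : ℕ) (π : Equiv.Perm (Fin (m + 1)))
    (v : Fin (m + 1) → ZMod 2) (e : ZMod 2) (c : ℂ) :
    ∑ p ∈ (Finset.univ : Finset (Fin (2^(m+1)))).offDiag, gdjT m π v e c p = 0 := by
  apply Finset.sum_involution (fun p _ => gdjInv m π p)
  · -- f a + f (g a) = 0
    intro p hp
    rw [Finset.mem_offDiag] at hp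
    obtain ⟨-, -, hne⟩ := hp
    unfold gdjInv
    rw [dif_neg hne]
    by_cases h0 : (gdjR m π p hne).val = 0
    · rw [dif_pos h0]
      rw [gdjT_zero_of_min0 m π v e c p hne h0]
      ring
    · rw [dif_neg h0]
      rw [gdjT_flip m π v e c p hne h0 _ rfl]
      ring
  · -- f a ≠ 0 → g a ≠ a
    intro p hp hT
    rw [Finset.mem_offDiag] at hp
    obtain ⟨-, -, hne⟩ := hp
    unfold gdjInv
    rw [dif_neg hne]
    by_cases h0 : (gdjR m π p hne).val = 0
    · exact absurd (gdjT_zero_of_min0 m π v e c p hne h0) hT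
    · rw [dif_neg h0]
      intro hc
      have h1 : gdjFlip (π ⟨(gdjR m π p hne).val - 1,
          Nat.lt_of_le_of_lt (Nat.sub_le _ _) (gdjR m π p hne).isLt⟩) p.1 = p.1 :=
        congrArg Prod.fst hc
      have hv : p.1.val ^^^ 2^((π ⟨(gdjR m π p hne).val - 1,
          Nat.lt_of_le_of_lt (Nat.sub_le _ _) (gdjR m π p hne).isLt⟩ : Fin (m+1))).val
          = p.1.val := congrArg Fin.val h1
      rw [Nat.xor_comm] at hv
      have h2 := congrArg (fun n => n ^^^ p.1.val) hv
      simp only [Nat.xor_xor_cancel_right, Nat.xor_self] at h2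
      exact (Nat.two_pow_pos _).ne' h2
  · -- g a ∈ s
    intro p hp
    rw [Finset.mem_offDiag] at hp ⊢
    obtain ⟨-, -, hne⟩ := hp
    refine ⟨Finset.mem_univ _, Finset.mem_univ _, ?_⟩
    unfold gdjInv
    rw [dif_neg hne]
    by_cases h0 : (gdjR m π p hne).val = 0
    · rw [dif_pos h0]; exact hne
    · rw [dif_neg h0]
      exact gdjFlip_ne _ _ _ hne
  · -- g (g a) = a
    intro p hp
    rw [Finset.mem_offDiag] at hp
    obtain ⟨-, -, hne⟩ := hp
    unfold gdjInv
    rw [dif_neg hne]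
    by_cases h0 : (gdjR m π p hne).val = 0
    · rw [dif_pos h0, dif_neg hne, dif_pos h0]
    · rw [dif_neg h0]
      set kq : Fin (m+1) := ⟨(gdjR m π p hne).val - 1,
        Nat.lt_of_le_of_lt (Nat.sub_le _ _) (gdjR m π p hne).isLt⟩ with hkq
      have hne' : (gdjFlip (π kq) p.1, gdjFlip (π kq) p.2).1
          ≠ (gdjFlip (π kq) p.1, gdjFlip (π kq) p.2).2 := gdjFlip_ne _ _ _ hne
      rw [dif_neg hne']
      have hR := gdjR_flip m π p hne kq hne'
      rw [dif_neg (show ¬ (gdjR m π (gdjFlip (π kq) p.1, gdjFlip (π kq) p.2) hne').val = 0 by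
        rw [hR]; exact h0)]
      simp only [hR, ← hkq, gdjFlip_flip]

private lemma gdj_prod (m : ℕ) (π : Equiv.Perm (Fin (m + 1)))
    (v : Fin (m + 1) → ZMod 2) (e : ZMod 2) (t : ℝ) :
    (∑ i : Fin (2^(m+1)), ((-1:ℂ))^((gdjF m π v e i.val).val)
        * Complex.exp (2 * (Real.pi : ℂ) * Complex.I * (i.val : ℂ) * (t : ℂ)))
      * (starRingEnd ℂ) (∑ i : Fin (2^(m+1)), ((-1:ℂ))^((gdjF m π v e i.val).val)
        * Complex.exp (2 * (Real.pi : ℂ) * Complex.I * (i.val : ℂ) * (t : ℂ)))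
    = ∑ i : Fin (2^(m+1)), ∑ j : Fin (2^(m+1)),
        ((-1:ℂ))^((gdjF m π v e i.val + gdjF m π v e j.val).val)
          * Complex.exp ((2 * (Real.pi : ℂ) * Complex.I * (t : ℂ)) * (i.val : ℂ)
            - (2 * (Real.pi : ℂ) * Complex.I * (t : ℂ)) * (j.val : ℂ)) := by
  rw [map_sum, Finset.sum_mul_sum]
  refine Finset.sum_congr rfl fun i _ => Finset.sum_congr rfl fun j _ => ?_
  rw [map_mul, map_pow, map_neg, map_one, ← Complex.exp_conj]
  rw [gdj_neg_one_pow_add]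
  have hconj : (starRingEnd ℂ) (2 * (Real.pi : ℂ) * Complex.I * (j.val : ℂ) * (t : ℂ))
      = -(2 * (Real.pi : ℂ) * Complex.I * (j.val : ℂ) * (t : ℂ)) := by
    simp only [map_mul, Complex.conj_I, Complex.conj_ofReal, map_ofNat, Complex.conj_natCast]
    ring
  rw [hconj, mul_mul_mul_comm, ← Complex.exp_add,
    show (2 * (Real.pi : ℂ) * Complex.I * (i.val : ℂ) * (t : ℂ))
        + -(2 * (Real.pi : ℂ) * Complex.I * (j.val : ℂ) * (t : ℂ))
      = (2 * (Real.pi : ℂ) * Complex.I * (t : ℂ)) * (i.val : ℂ)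
        - (2 * (Real.pi : ℂ) * Complex.I * (t : ℂ)) * (j.val : ℂ) from by ring]

private lemma gdj_main (m : ℕ) (π : Equiv.Perm (Fin (m + 1)))
    (v : Fin (m + 1) → ZMod 2) (e : ZMod 2) (t : ℝ) :
    (∑ i : Fin (2^(m+1)), ((-1:ℂ))^((gdjF m π v e i.val).val)
        * Complex.exp (2 * (Real.pi : ℂ) * Complex.I * (i.val : ℂ) * (t : ℂ)))
      * (starRingEnd ℂ) (∑ i : Fin (2^(m+1)), ((-1:ℂ))^((gdjF m π v e i.val).val)
        * Complex.exp (2 * (Real.pi : ℂ) * Complex.I * (i.val : ℂ) * (t : ℂ)))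
    + (∑ i : Fin (2^(m+1)), ((-1:ℂ))^((gdjF m π (gdjV m π v) e i.val).val)
        * Complex.exp (2 * (Real.pi : ℂ) * Complex.I * (i.val : ℂ) * (t : ℂ)))
      * (starRingEnd ℂ) (∑ i : Fin (2^(m+1)), ((-1:ℂ))^((gdjF m π (gdjV m π v) e i.val).val)
        * Complex.exp (2 * (Real.pi : ℂ) * Complex.I * (i.val : ℂ) * (t : ℂ)))
    = 2 * 2^(m+1) := by
  set c : ℂ := 2 * (Real.pi : ℂ) * Complex.I * (t : ℂ) with hc
  rw [gdj_prod, gdj_prod]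
  have hT : (∑ i : Fin (2^(m+1)), ∑ j : Fin (2^(m+1)),
        ((-1:ℂ))^((gdjF m π v e i.val + gdjF m π v e j.val).val)
          * Complex.exp (c * (i.val : ℂ) - c * (j.val : ℂ)))
      + (∑ i : Fin (2^(m+1)), ∑ j : Fin (2^(m+1)),
        ((-1:ℂ))^((gdjF m π (gdjV m π v) e i.val + gdjF m π (gdjV m π v) e j.val).val)
          * Complex.exp (c * (i.val : ℂ) - c * (j.val : ℂ)))
      = ∑ p ∈ (Finset.univ : Finset (Fin (2^(m+1)))) ×ˢ (Finset.univ : Finset (Fin (2^(m+1)))),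
          gdjT m π v e c p := by
    rw [Finset.sum_product]
    rw [← Finset.sum_add_distrib]
    refine Finset.sum_congr rfl fun i _ => ?_
    rw [← Finset.sum_add_distrib]
    refine Finset.sum_congr rfl fun j _ => ?_
    unfold gdjT
    ring
  rw [hT, ← Finset.diag_union_offDiag (Finset.univ : Finset (Fin (2^(m+1)))),
    Finset.sum_union (Finset.disjoint_diag_offDiag _), gdj_offdiag_sum, add_zero,
    Finset.sum_diag]
  have hdiag : ∀ i : Fin (2^(m+1)), gdjT m π v e c (i, i) = 2 := by
    intro i
    unfold gdjT
    have h1 : gdjF m π v e i.val + gdjF m π v e i.val = 0 := CharTwo.add_self_eq_zero _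
    have h2 : gdjF m π (gdjV m π v) e i.val + gdjF m π (gdjV m π v) e i.val = 0 :=
      CharTwo.add_self_eq_zero _
    show ((-1:ℂ)^((gdjF m π v e i.val + gdjF m π v e i.val).val) + _) * _ = 2
    rw [h1, h2, sub_self, Complex.exp_zero]
    norm_num [ZMod.val_zero]
  rw [Finset.sum_congr rfl fun i _ => hdiag i, Finset.sum_const, Finset.card_univ,
    Fintype.card_fin]
  push_cast
  ring

/-- Golay–Davis–Jedwab: for any permutation `π` of `{1,...,m+1}`, any `v` and `e`,
the ±1 modulation of the truth table of
`f(x) = Σ_{r=1}^{m} x_{π(r)} x_{π(r+1)} + Σ_r v_r x_r + e` is a Golay complementary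
sequence of length `2^(m+1)`; in particular its continuous PAPR is at most `2`. -/
theorem stmt8 (m : ℕ) (π : Equiv.Perm (Fin (m + 1)))
    (v : Fin (m + 1) → ZMod 2) (e : ZMod 2) :
    ∀ t : ℝ, 0 ≤ t → t < 1 →
      ‖∑ i : Fin (2 ^ (m + 1)),
          ((-1 : ℂ) ^ ((∑ r : Fin m, bitf i.val (π r.castSucc).val * bitf i.val (π r.succ).val)
              + (∑ r : Fin (m + 1), v r * bitf i.val r.val) + e).val)
            * Complex.exp (2 * (Real.pi : ℂ) * Complex.I * (i.val : ℂ) * (t : ℂ))‖ ^ 2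
        / 2 ^ (m + 1) ≤ 2 := by
  intro t _ _
  show ‖∑ i : Fin (2 ^ (m + 1)), ((-1 : ℂ) ^ ((gdjF m π v e i.val).val))
      * Complex.exp (2 * (Real.pi : ℂ) * Complex.I * (i.val : ℂ) * (t : ℂ))‖ ^ 2
    / 2 ^ (m + 1) ≤ 2
  set F : ℂ := ∑ i : Fin (2 ^ (m + 1)), ((-1 : ℂ) ^ ((gdjF m π v e i.val).val))
    * Complex.exp (2 * (Real.pi : ℂ) * Complex.I * (i.val : ℂ) * (t : ℂ)) with hF
  set G : ℂ := ∑ i : Fin (2 ^ (m + 1)), ((-1 : ℂ) ^ ((gdjF m π (gdjV m π v) e i.val).val))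
    * Complex.exp (2 * (Real.pi : ℂ) * Complex.I * (i.val : ℂ) * (t : ℂ)) with hG
  have hmain := gdj_main m π v e t
  rw [← hF, ← hG, Complex.mul_conj, Complex.mul_conj] at hmain
  have h1 : Complex.normSq F + Complex.normSq G = 2 * 2^(m+1) := by
    exact_mod_cast hmain
  have h2 : ‖F‖ ^ 2 ≤ 2 * 2^(m+1) := by
    rw [Complex.sq_norm]
    have := Complex.normSq_nonneg G
    linarith
  rw [div_le_iff₀ (by positivity : (0:ℝ) < 2^(m+1))]
  linarith
end

section
/- A pair of ±1 sequences (b, b') of length M that are Golay complementary (i.e., the sum of their aperiodic autocorrelations vanishes at every nonzero shift) satisfies PAPR(b) ≤ 2, where PAPR(b) = max_{t∈[0,1)} |Σ_{i=0}^{M−1} b_i e^{2πjit}|² / M. -/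
/-- Aperiodic autocorrelation at shift `u` of a length-`M` sequence `b`. -/
def apac (M : ℕ) (b : ℕ → ℤ) (u : ℕ) : ℤ :=
  ∑ i ∈ Finset.range (M - u), b i * b (i + u)

open Finset

lemma split_sum (M : ℕ) (f : ℕ → ℕ → ℂ) :
    ∑ i ∈ range M, ∑ j ∈ range M, f i j
      = (∑ i ∈ range M, f i i) + (∑ i ∈ range M, ∑ j ∈ range i, f i j)
        + (∑ i ∈ range M, ∑ j ∈ range i, f j i) := by
  induction M with
  | zero => simp
  | succ n ih =>
    rw [Finset.sum_range_succ, Finset.sum_range_succ (f := fun i => f i i),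
      Finset.sum_range_succ (f := fun i => ∑ j ∈ range i, f i j),
      Finset.sum_range_succ (f := fun i => ∑ j ∈ range i, f j i),
      Finset.sum_range_succ (f := fun j => f n j)]
    have : ∑ i ∈ range n, ∑ j ∈ range (n+1), f i j
        = (∑ i ∈ range n, ∑ j ∈ range n, f i j) + ∑ i ∈ range n, f i n := by
      rw [← Finset.sum_add_distrib]
      exact Finset.sum_congr rfl fun i _ => Finset.sum_range_succ _ n
    rw [this, ih]
    ring

lemma tri_sum (M : ℕ) (g : ℕ → ℕ → ℂ) :
    ∑ i ∈ range M, ∑ j ∈ range i, g i j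
      = ∑ u ∈ range (M-1), ∑ j ∈ range (M-1-u), g (j+u+1) j := by
  rw [Finset.sum_sigma', Finset.sum_sigma']
  refine Finset.sum_nbij' (fun p => ⟨p.1 - p.2 - 1, p.2⟩) (fun p => ⟨p.2 + p.1 + 1, p.2⟩)
    ?_ ?_ ?_ ?_ ?_
  · rintro ⟨i, j⟩ h
    simp only [Finset.mem_sigma, Finset.mem_range] at h ⊢
    omega
  · rintro ⟨u, j⟩ h
    simp only [Finset.mem_sigma, Finset.mem_range] at h ⊢
    omega
  · rintro ⟨i, j⟩ h
    simp only [Finset.mem_sigma, Finset.mem_range] at h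
    simp only [Sigma.mk.inj_iff, heq_eq_eq, and_true]
    omega
  · rintro ⟨u, j⟩ h
    simp only [Finset.mem_sigma, Finset.mem_range] at h
    simp only [Sigma.mk.inj_iff, heq_eq_eq, and_true]
    omega
  · rintro ⟨i, j⟩ h
    simp only [Finset.mem_sigma, Finset.mem_range] at h
    simp only []
    congr 1
    omega

lemma key (M : ℕ) (b : ℕ → ℤ) (hb : ∀ i < M, b i = 1 ∨ b i = -1) (z : ℂ)
    (hz : z * (starRingEnd ℂ) z = 1) :
    (∑ i ∈ range M, (b i : ℂ) * z ^ i)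
        * (starRingEnd ℂ) (∑ i ∈ range M, (b i : ℂ) * z ^ i)
      = M + ∑ u ∈ range (M-1),
          (apac M b (u+1) : ℂ) * (z^(u+1) + ((starRingEnd ℂ) z)^(u+1)) := by
  set w := (starRingEnd ℂ) z with hw
  have hconj : (starRingEnd ℂ) (∑ i ∈ range M, (b i : ℂ) * z ^ i)
      = ∑ j ∈ range M, (b j : ℂ) * w ^ j := by
    rw [map_sum]
    refine Finset.sum_congr rfl fun j _ => ?_
    simp [hw, map_mul, map_pow]
  rw [hconj, Finset.sum_mul_sum]
  have hsplit := split_sum M (fun i j => ((b i : ℂ) * z ^ i) * ((b j : ℂ) * w ^ j))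
  rw [hsplit]
  have hzw : ∀ i : ℕ, z ^ i * w ^ i = 1 := by
    intro i; rw [← mul_pow, hz, one_pow]
  have hdiag : ∑ i ∈ range M, ((b i : ℂ) * z ^ i) * ((b i : ℂ) * w ^ i) = (M : ℂ) := by
    rw [show ((M : ℕ) : ℂ) = ∑ _i ∈ range M, (1 : ℂ) by simp]
    refine Finset.sum_congr rfl fun i hi => ?_
    have hb2 : (b i : ℂ) * (b i : ℂ) = 1 := by
      rcases hb i (Finset.mem_range.mp hi) with h | h <;> simp [h]
    calc ((b i : ℂ) * z ^ i) * ((b i : ℂ) * w ^ i)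
        = ((b i : ℂ) * (b i : ℂ)) * (z ^ i * w ^ i) := by ring
      _ = 1 := by rw [hb2, hzw, one_mul]
  -- lower triangle (i > j): z powers
  have hlow : ∑ i ∈ range M, ∑ j ∈ range i, ((b i : ℂ) * z ^ i) * ((b j : ℂ) * w ^ j)
      = ∑ u ∈ range (M-1), (apac M b (u+1) : ℂ) * z ^ (u+1) := by
    rw [tri_sum]
    refine Finset.sum_congr rfl fun u _ => ?_
    rw [apac]
    push_cast
    rw [Finset.sum_mul]
    have hM1 : M - 1 - u = M - (u + 1) := by omega
    rw [hM1]
    refine Finset.sum_congr rfl fun j _ => ?_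
    have : z ^ (j + u + 1) = z ^ j * z ^ (u + 1) := by
      rw [← pow_add]; ring_nf
    rw [this]
    calc ((b (j+u+1) : ℂ) * (z ^ j * z ^ (u+1))) * ((b j : ℂ) * w ^ j)
        = (b j : ℂ) * (b (j + (u+1)) : ℂ) * z ^ (u+1) * (z ^ j * w ^ j) := by
          rw [show j + (u+1) = j + u + 1 by omega]; ring
      _ = (b j : ℂ) * (b (j + (u+1)) : ℂ) * z ^ (u+1) := by rw [hzw, mul_one]
  -- upper triangle (i < j): w powers
  have hup : ∑ i ∈ range M, ∑ j ∈ range i, ((b j : ℂ) * z ^ j) * ((b i : ℂ) * w ^ i)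
      = ∑ u ∈ range (M-1), (apac M b (u+1) : ℂ) * w ^ (u+1) := by
    rw [tri_sum]
    refine Finset.sum_congr rfl fun u _ => ?_
    rw [apac]
    push_cast
    rw [Finset.sum_mul]
    have hM1 : M - 1 - u = M - (u + 1) := by omega
    rw [hM1]
    refine Finset.sum_congr rfl fun j _ => ?_
    have : w ^ (j + u + 1) = w ^ j * w ^ (u + 1) := by
      rw [← pow_add]; ring_nf
    rw [this]
    calc ((b j : ℂ) * z ^ j) * ((b (j+u+1) : ℂ) * (w ^ j * w ^ (u+1)))
        = (b j : ℂ) * (b (j + (u+1)) : ℂ) * w ^ (u+1) * (z ^ j * w ^ j) := by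
          rw [show j + (u+1) = j + u + 1 by omega]; ring
      _ = (b j : ℂ) * (b (j + (u+1)) : ℂ) * w ^ (u+1) := by rw [hzw, mul_one]
  rw [hdiag, hlow, hup, add_assoc]
  rw [← Finset.sum_add_distrib]
  congr 1
  refine Finset.sum_congr rfl fun u _ => ?_
  ring

/-- A Golay complementary pair of ±1 sequences of length `M` satisfies
`PAPR(b) ≤ 2`. -/
theorem stmt9 (M : ℕ) (hM : 0 < M) (b b' : ℕ → ℤ)
    (hb : ∀ i < M, b i = 1 ∨ b i = -1) (hb' : ∀ i < M, b' i = 1 ∨ b' i = -1)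
    (hcomp : ∀ u, 1 ≤ u → u ≤ M - 1 → apac M b u + apac M b' u = 0) :
    ∀ t : ℝ, 0 ≤ t → t < 1 →
      ‖∑ i ∈ Finset.range M,
          (b i : ℂ) * Complex.exp (2 * (Real.pi : ℂ) * Complex.I * (i : ℂ) * (t : ℂ))‖ ^ 2
        / M ≤ 2 := by
  intro t _ _
  set z : ℂ := Complex.exp (2 * (Real.pi : ℂ) * Complex.I * (t : ℂ)) with hzdef
  have hexp : ∀ i : ℕ, Complex.exp (2 * (Real.pi : ℂ) * Complex.I * (i : ℂ) * (t : ℂ))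
      = z ^ i := by
    intro i
    rw [hzdef, ← Complex.exp_nat_mul]
    congr 1
    ring
  have hzabs : ‖z‖ = 1 := by
    rw [hzdef, Complex.norm_exp]
    have : (2 * (Real.pi : ℂ) * Complex.I * (t : ℂ)).re = 0 := by
      simp [Complex.mul_re, Complex.mul_im]
    rw [this, Real.exp_zero]
  have hz : z * (starRingEnd ℂ) z = 1 := by
    rw [Complex.mul_conj]
    rw [← Complex.sq_norm, hzabs]
    norm_num
  set S : ℂ := ∑ i ∈ Finset.range M, (b i : ℂ) * z ^ i with hS
  set S' : ℂ := ∑ i ∈ Finset.range M, (b' i : ℂ) * z ^ i with hS'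
  have hsum : (Complex.normSq S : ℂ) + (Complex.normSq S' : ℂ) = 2 * M := by
    rw [← Complex.mul_conj, ← Complex.mul_conj, key M b hb z hz, key M b' hb' z hz]
    have : ∑ u ∈ range (M-1), (apac M b (u+1) : ℂ) * (z^(u+1) + ((starRingEnd ℂ) z)^(u+1))
        + ∑ u ∈ range (M-1), (apac M b' (u+1) : ℂ) * (z^(u+1) + ((starRingEnd ℂ) z)^(u+1))
        = 0 := by
      rw [← Finset.sum_add_distrib]
      refine Finset.sum_eq_zero fun u hu => ?_
      have h := hcomp (u+1) (by omega) (by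
        have := Finset.mem_range.mp hu; omega)
      have : ((apac M b (u+1) : ℂ) + (apac M b' (u+1) : ℂ)) = 0 := by
        rw [← Int.cast_add, h, Int.cast_zero]
      rw [← add_mul, this, zero_mul]
    calc (M : ℂ) + (∑ u ∈ range (M-1), (apac M b (u+1) : ℂ) * (z^(u+1) + ((starRingEnd ℂ) z)^(u+1)))
          + ((M : ℂ) + ∑ u ∈ range (M-1), (apac M b' (u+1) : ℂ) * (z^(u+1) + ((starRingEnd ℂ) z)^(u+1)))
        = 2 * M + ((∑ u ∈ range (M-1), (apac M b (u+1) : ℂ) * (z^(u+1) + ((starRingEnd ℂ) z)^(u+1)))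
          + ∑ u ∈ range (M-1), (apac M b' (u+1) : ℂ) * (z^(u+1) + ((starRingEnd ℂ) z)^(u+1))) := by
          ring
      _ = 2 * M := by rw [this, add_zero]
  have hsumR : Complex.normSq S + Complex.normSq S' = 2 * M := by
    have := hsum
    rw [← Complex.ofReal_add] at this
    have h2 : ((Complex.normSq S + Complex.normSq S' : ℝ) : ℂ) = ((2 * M : ℝ) : ℂ) := by
      rw [this]; push_cast; ring
    exact_mod_cast h2
  have hle : Complex.normSq S ≤ 2 * M := by
    nlinarith [Complex.normSq_nonneg S']
  have habs : ‖S‖ ^ 2 = Complex.normSq S := Complex.sq_norm S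
  have hMpos : (0 : ℝ) < M := by exact_mod_cast hM
  have hSeq : (∑ i ∈ Finset.range M,
      (b i : ℂ) * Complex.exp (2 * (Real.pi : ℂ) * Complex.I * (i : ℂ) * (t : ℂ))) = S := by
    rw [hS]
    exact Finset.sum_congr rfl fun i _ => by rw [hexp i]
  rw [hSeq, div_le_iff₀ hMpos, habs]
  linarith
end

section
/- If every K-sparse vector is uniquely determined by its measurements y = Φx, equivalently if 2K < spark(Φ), and μ(Φ) is the coherence of unit-norm-column Φ, then any K with K < (1 + 1/μ(Φ))/2 guarantees unique recovery of every K-sparse signal from Φx. -/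
/-- If `Φ` has unit-norm columns with coherence at most `μ > 0`, then any sparsity
level `K` with `K < (1 + 1/μ)/2` guarantees unique recovery of every `K`-sparse
signal from `Φx`. -/
theorem stmt14 (M N K : ℕ) (Φ : Matrix (Fin M) (Fin N) ℂ)
    (hnorm : ∀ j, ∑ i, ‖Φ i j‖ ^ 2 = 1)
    (μ : ℝ) (hμ : 0 < μ)
    (hcoh : ∀ j₁ j₂, j₁ ≠ j₂ →
      ‖∑ i, (starRingEnd ℂ) (Φ i j₁) * Φ i j₂‖ ≤ μ)
    (hK : (K : ℝ) < (1 + 1 / μ) / 2) :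
    ∀ x x' : Fin N → ℂ,
      (Finset.univ.filter (fun j => x j ≠ 0)).card ≤ K →
      (Finset.univ.filter (fun j => x' j ≠ 0)).card ≤ K →
      Φ.mulVec x = Φ.mulVec x' → x = x' := by
  intro x x' hx hx' heq
  by_contra hne
  set h : Fin N → ℂ := x - x' with hh
  have hΦh : Φ.mulVec h = 0 := by
    rw [hh, Matrix.mulVec_sub, heq, sub_self]
  have hhne : h ≠ 0 := sub_ne_zero.mpr hne
  set S := Finset.univ.filter (fun j => h j ≠ 0) with hS
  have hScard : S.card ≤ 2 * K := by
    have hsub : S ⊆ (Finset.univ.filter (fun j => x j ≠ 0)) ∪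
        (Finset.univ.filter (fun j => x' j ≠ 0)) := by
      intro l hl
      simp only [hS, Finset.mem_filter, Finset.mem_univ, true_and] at hl
      simp only [Finset.mem_union, Finset.mem_filter, Finset.mem_univ, true_and]
      by_contra hc
      push_neg at hc
      apply hl
      simp [hh, hc.1, hc.2]
    calc S.card ≤ _ := Finset.card_le_card hsub
      _ ≤ _ := Finset.card_union_le _ _
      _ ≤ 2 * K := by omega
  have hSne : S.Nonempty := by
    obtain ⟨l, hl⟩ := Function.ne_iff.mp hhne
    refine ⟨l, ?_⟩
    simp only [hS, Finset.mem_filter, Finset.mem_univ, true_and]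
    simpa using hl
  obtain ⟨j, hjS, hjmax⟩ := S.exists_max_image (fun l => ‖h l‖) hSne
  have hjne : h j ≠ 0 := by
    simpa [hS] using hjS
  have hjpos : 0 < ‖h j‖ := by
    simpa using hjne
  -- bound |h l| by |h j| for all l
  have hmax : ∀ l, ‖h l‖ ≤ ‖h j‖ := by
    intro l
    by_cases hl : l ∈ S
    · exact hjmax l hl
    · have : h l = 0 := by
        by_contra hc
        exact hl (by simp [hS, hc])
      simp [this]
  -- key identity
  have key0 : ∑ l, h l * (∑ i, (starRingEnd ℂ) (Φ i j) * Φ i l) = 0 := by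
    have : ∑ i, (starRingEnd ℂ) (Φ i j) * (Φ.mulVec h) i = 0 := by
      rw [hΦh]; simp
    rw [← this]
    simp only [Matrix.mulVec, dotProduct, Finset.mul_sum]
    rw [Finset.sum_comm]
    apply Finset.sum_congr rfl; intro l _
    apply Finset.sum_congr rfl; intro i _
    ring
  have hGjj : ∑ i, (starRingEnd ℂ) (Φ i j) * Φ i j = 1 := by
    have : ∀ i, (starRingEnd ℂ) (Φ i j) * Φ i j = ((‖Φ i j‖ ^ 2 : ℝ) : ℂ) := by
      intro i
      rw [Complex.sq_norm]
      exact_mod_cast (Complex.normSq_eq_conj_mul_self (z := Φ i j)).symm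
    rw [Finset.sum_congr rfl (fun i _ => this i), ← Complex.ofReal_sum, hnorm j]
    simp
  have key : h j = - ∑ l ∈ Finset.univ.erase j, h l * (∑ i, (starRingEnd ℂ) (Φ i j) * Φ i l) := by
    have := key0
    rw [← Finset.add_sum_erase _ _ (Finset.mem_univ j)] at this
    rw [hGjj, mul_one] at this
    linear_combination this
  -- estimate
  have hbound : ‖h j‖ ≤ ((S.card : ℝ) - 1) * (μ * ‖h j‖) := by
    have e1 : ‖h j‖ = ‖∑ l ∈ Finset.univ.erase j,
        h l * (∑ i, (starRingEnd ℂ) (Φ i j) * Φ i l)‖ := by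
      conv_lhs => rw [key]
      exact norm_neg _
    calc ‖h j‖
        = ‖∑ l ∈ Finset.univ.erase j,
            h l * (∑ i, (starRingEnd ℂ) (Φ i j) * Φ i l)‖ := e1
      _ ≤ ∑ l ∈ Finset.univ.erase j,
            ‖h l * (∑ i, (starRingEnd ℂ) (Φ i j) * Φ i l)‖ := by
          exact norm_sum_le _ _
      _ = ∑ l ∈ S.erase j,
            ‖h l * (∑ i, (starRingEnd ℂ) (Φ i j) * Φ i l)‖ := by
          apply (Finset.sum_subset _ _).symm
          · intro l hl
            simp only [Finset.mem_erase] at hl ⊢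
            exact ⟨hl.1, Finset.mem_univ l⟩
          · intro l _ hl
            have hl0 : h l = 0 := by
              by_contra hc
              simp only [Finset.mem_erase, hS, Finset.mem_filter, Finset.mem_univ,
                true_and, not_and] at hl ⊢
              rcases Finset.mem_erase.mp ‹l ∈ Finset.univ.erase j› with ⟨hlj, _⟩
              exact hc (by simpa using hl hlj)
            simp [hl0]
      _ ≤ ∑ l ∈ S.erase j, μ * ‖h j‖ := by
          apply Finset.sum_le_sum
          intro l hl
          rw [norm_mul]
          have hlj : l ≠ j := (Finset.mem_erase.mp hl).1
          calc ‖h l‖ * ‖∑ i, (starRingEnd ℂ) (Φ i j) * Φ i l‖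
              ≤ ‖h j‖ * μ := by
                apply mul_le_mul (hmax l) (hcoh j l (Ne.symm hlj)) (by positivity)
                  (by positivity)
            _ = μ * ‖h j‖ := by ring
      _ = ((S.erase j).card : ℝ) * (μ * ‖h j‖) := by
          rw [Finset.sum_const, nsmul_eq_mul]
      _ = ((S.card : ℝ) - 1) * (μ * ‖h j‖) := by
          rw [Finset.card_erase_of_mem hjS]
          have h1 : 1 ≤ S.card := Finset.card_pos.mpr ⟨j, hjS⟩
          push_cast [h1]
          ring
  -- contradiction from arithmetic
  have hμK : ((S.card : ℝ) - 1) * μ < 1 := by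
    have h2K : (S.card : ℝ) ≤ 2 * K := by exact_mod_cast hScard
    have : (2 * (K : ℝ) - 1) * μ < 1 := by
      have : 2 * (K : ℝ) - 1 < 1 / μ := by linarith
      calc (2 * (K : ℝ) - 1) * μ < (1 / μ) * μ := by
            apply mul_lt_mul_of_pos_right this hμ
        _ = 1 := by field_simp
    nlinarith
  nlinarith [hbound, hjpos, hμK, mul_pos hμ hjpos]
end

section
/- Every x ∈ C^N that is K-sparse is uniquely determined among K-sparse vectors by y = Φx if and only if K < spark(Φ)/2. -/
/-- Every `K`-sparse vector `x ∈ ℂ^N` is uniquely determined among `K`-sparse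
vectors by `y = Φx` if and only if `2K < spark(Φ)`, where `spark(Φ)` is the
smallest `ℓ₀`-norm of a nonzero vector in the kernel of `Φ` (equivalently the
smallest cardinality of a linearly dependent set of columns), taken in `ℕ∞`. -/
theorem stmt15 (M N K : ℕ) (Φ : Matrix (Fin M) (Fin N) ℂ) :
    (∀ x x' : Fin N → ℂ,
        (Finset.univ.filter (fun j => x j ≠ 0)).card ≤ K →
        (Finset.univ.filter (fun j => x' j ≠ 0)).card ≤ K →
        Φ.mulVec x = Φ.mulVec x' → x = x')
      ↔ (2 * K : ℕ∞) < sInf {n : ℕ∞ | ∃ x : Fin N → ℂ, x ≠ 0 ∧ Φ.mulVec x = 0 ∧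
          ((Finset.univ.filter (fun j => x j ≠ 0)).card : ℕ∞) = n} := by
  set S : Set ℕ∞ := {n : ℕ∞ | ∃ x : Fin N → ℂ, x ≠ 0 ∧ Φ.mulVec x = 0 ∧
      ((Finset.univ.filter (fun j => x j ≠ 0)).card : ℕ∞) = n} with hSdef
  constructor
  · intro huniq
    by_contra h
    push_neg at h
    have hne : S.Nonempty := by
      by_contra hne
      rw [Set.not_nonempty_iff_eq_empty] at hne
      rw [hne, sInf_empty] at h
      have htop : (2 * K : ℕ∞) = ⊤ := top_le_iff.mp h
      have : ((2 * K : ℕ) : ℕ∞) = ⊤ := by push_cast; exact htop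
      exact ENat.coe_ne_top _ this
    obtain ⟨x, hx0, hker, hcard⟩ := csInf_mem hne
    set s : Finset (Fin N) := Finset.univ.filter (fun j => x j ≠ 0) with hs
    have hc : s.card ≤ 2 * K := by
      have h2 : ((s.card : ℕ) : ℕ∞) ≤ ((2 * K : ℕ) : ℕ∞) := by
        rw [hcard]; push_cast; exact h
      exact_mod_cast h2
    obtain ⟨T, hTs, hTcard⟩ := Finset.exists_subset_card_eq (min_le_right K s.card)
    have hT1 : T.card ≤ K := hTcard ▸ min_le_left K s.card
    have hT2 : (s \ T).card ≤ K := by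
      rw [Finset.card_sdiff_of_subset hTs, hTcard]
      omega
    set u : Fin N → ℂ := fun j => if j ∈ T then x j else 0 with hu
    set v : Fin N → ℂ := fun j => if j ∈ T then 0 else -x j with hv
    have hxuv : x = u - v := by
      funext j
      by_cases hj : j ∈ T <;> simp [hu, hv, hj]
    have hueq : Φ.mulVec u = Φ.mulVec v := by
      have h0 : Φ.mulVec u - Φ.mulVec v = 0 := by
        rw [← Matrix.mulVec_sub, ← hxuv]; exact hker
      exact sub_eq_zero.mp h0
    have hucard : (Finset.univ.filter (fun j => u j ≠ 0)).card ≤ K := by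
      refine le_trans (Finset.card_le_card ?_) hT1
      intro j hj
      simp only [Finset.mem_filter, Finset.mem_univ, true_and, hu] at hj
      by_contra hjT
      simp [hjT] at hj
    have hvcard : (Finset.univ.filter (fun j => v j ≠ 0)).card ≤ K := by
      refine le_trans (Finset.card_le_card ?_) hT2
      intro j hj
      simp only [Finset.mem_filter, Finset.mem_univ, true_and, hv] at hj
      rw [Finset.mem_sdiff]
      by_cases hjT : j ∈ T
      · simp [hjT] at hj
      · refine ⟨?_, hjT⟩
        simp only [hjT, if_false, neg_ne_zero] at hj
        simp [hs, hj]
    have huv := huniq u v hucard hvcard hueq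
    exact hx0 (by rw [hxuv, huv, sub_self])
  · intro h x x' hx hx' heq
    by_contra hne
    have hz : x - x' ≠ 0 := sub_ne_zero.mpr hne
    have hker : Φ.mulVec (x - x') = 0 := by
      rw [Matrix.mulVec_sub, heq, sub_self]
    have hmem : ((Finset.univ.filter (fun j => (x - x') j ≠ 0)).card : ℕ∞) ∈ S :=
      ⟨x - x', hz, hker, rfl⟩
    have hle : sInf S ≤ ((Finset.univ.filter (fun j => (x - x') j ≠ 0)).card : ℕ∞) :=
      sInf_le hmem
    have hsub : (Finset.univ.filter (fun j => (x - x') j ≠ 0)) ⊆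
        (Finset.univ.filter (fun j => x j ≠ 0)) ∪ (Finset.univ.filter (fun j => x' j ≠ 0)) := by
      intro j hj
      simp only [Finset.mem_filter, Finset.mem_univ, true_and, Finset.mem_union, Pi.sub_apply] at *
      by_contra hc
      push_neg at hc
      exact hj (by rw [hc.1, hc.2, sub_self])
    have hcard : (Finset.univ.filter (fun j => (x - x') j ≠ 0)).card ≤ 2 * K := by
      calc (Finset.univ.filter (fun j => (x - x') j ≠ 0)).card
          ≤ ((Finset.univ.filter (fun j => x j ≠ 0)) ∪
             (Finset.univ.filter (fun j => x' j ≠ 0))).card := Finset.card_le_card hsub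
        _ ≤ _ + _ := Finset.card_union_le _ _
        _ ≤ 2 * K := by omega
    have : sInf S ≤ (2 * K : ℕ∞) := le_trans hle (by exact_mod_cast Nat.cast_le.mpr hcard)
    exact absurd h (not_lt.mpr this)
end
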